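/- Let C₀ = X₀(X₁² − X₂²), C₁ = X₁(X₂² − X₀²), C₂ = X₂(X₀² − X₁²) ∈ k[X₀,X₁,X₂] (the 2×2 minors of the matrix with rows (∂θ/∂Xᵢ) and (∂D/∂Xᵢ) for θ = X₀²+X₁²+X₂² and D = X₀X₁X₂). Then: (a) a nonzero vector v ∈ k³ satisfies C₀(v) = C₁(v) = C₂(v) = 0 if and only if v is a scalar multiple of one of the seven vectors (1,0,0), (0,1,0), (0,0,1), (1,1,1), (1,−1,1), (1,1,−1), (−1,1,1); (b) for each i ∈ {1,…,7}, no nonzero homogeneous quadratic polynomial vanishes at all six of these seven vectors other than the i-th, i.e. no six of the seven points lie on a conic. -/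

import Mathlib

open MvPolynomial Finsupp

private lemma fin3_eq {d e : Fin 3 →₀ ℕ} :
    d = e ↔ d 0 = e 0 ∧ d 1 = e 1 ∧ d 2 = e 2 := by
  constructor
  · rintro rfl; exact ⟨rfl, rfl, rfl⟩
  · rintro ⟨h0, h1, h2⟩; ext i; fin_cases i <;> assumption

private lemma fin3_deg (d : Fin 3 →₀ ℕ) : d.degree = d 0 + d 1 + d 2 := by
  rw [Finsupp.degree_apply, Finset.sum_subset (Finset.subset_univ _)
    (fun i _ hi => Finsupp.notMem_support_iff.mp hi), Fin.sum_univ_three]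

private lemma classify (d : Fin 3 →₀ ℕ) (h : d 0 + d 1 + d 2 = 2) :
    d = single 0 2 ∨ d = single 1 2 ∨ d = single 2 2 ∨
    d = single 0 1 + single 1 1 ∨ d = single 0 1 + single 2 1 ∨
    d = single 1 1 + single 2 1 := by
  simp only [fin3_eq, Finsupp.single_apply, Finsupp.add_apply]
  simp (config := { decide := true }) only [if_true, if_false, reduceIte]
  omega

private lemma X_mul_X {k : Type*} [CommRing k] (i j : Fin 3) :
    (X i * X j : MvPolynomial (Fin 3) k) = monomial (single i 1 + single j 1) 1 := by
  rw [← pow_one (X i), ← pow_one (X j), X_pow_eq_monomial, X_pow_eq_monomial,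
    monomial_mul, one_mul]

private lemma rep {k : Type*} [CommRing k] (q : MvPolynomial (Fin 3) k)
    (hq : q.IsHomogeneous 2) :
    q = C (coeff (single 0 2) q) * X 0 ^ 2 + C (coeff (single 1 2) q) * X 1 ^ 2
      + C (coeff (single 2 2) q) * X 2 ^ 2
      + C (coeff (single 0 1 + single 1 1) q) * (X 0 * X 1)
      + C (coeff (single 0 1 + single 2 1) q) * (X 0 * X 2)
      + C (coeff (single 1 1 + single 2 1) q) * (X 1 * X 2) := by
  ext d
  rw [X_mul_X, X_mul_X, X_mul_X]
  simp only [coeff_add, coeff_C_mul, X_pow_eq_monomial, coeff_monomial, mul_ite, mul_one,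
    mul_zero]
  by_cases hd : d 0 + d 1 + d 2 = 2
  · rcases classify d hd with rfl | rfl | rfl | rfl | rfl | rfl <;>
    · simp only [fin3_eq, Finsupp.single_apply, Finsupp.add_apply]
      simp (config := { decide := true }) only [if_true, if_false, reduceIte]
      simp
  · have hz : coeff d q = 0 := hq.coeff_eq_zero (by rw [fin3_deg]; exact hd)
    have key : ∀ m : Fin 3 →₀ ℕ, m 0 + m 1 + m 2 = 2 → ¬(m = d) := by
      rintro m hm rfl; exact hd hm
    rw [hz, if_neg (key _ (by simp)), if_neg (key _ (by simp)), if_neg (key _ (by simp)),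
      if_neg (key _ ?_), if_neg (key _ ?_), if_neg (key _ ?_)] <;>
      simp (config := { decide := true }) [Finsupp.single_apply]

private lemma vec7_5 {α : Type*} (a b c d e f g : α) : ![a,b,c,d,e,f,g] 5 = f := rfl
private lemma vec7_6 {α : Type*} (a b c d e f g : α) : ![a,b,c,d,e,f,g] 6 = g := rfl

/-- The Bateman configuration of `θ = X₀²+X₁²+X₂²` and `D = X₀X₁X₂`: the common zeros of
the minors `C₀ = X₀(X₁²−X₂²)`, `C₁ = X₁(X₂²−X₀²)`, `C₂ = X₂(X₀²−X₁²)` are exactly the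
seven points `(1,0,0), (0,1,0), (0,0,1), (1,1,1), (1,−1,1), (1,1,−1), (−1,1,1)`, and no
six of these seven points lie on a conic. -/
theorem bateman_configuration_example (k : Type*) [Field k] [CharZero k] [IsAlgClosed k] :
    let C0 : MvPolynomial (Fin 3) k := X 0 * (X 1 ^ 2 - X 2 ^ 2)
    let C1 : MvPolynomial (Fin 3) k := X 1 * (X 2 ^ 2 - X 0 ^ 2)
    let C2 : MvPolynomial (Fin 3) k := X 2 * (X 0 ^ 2 - X 1 ^ 2)
    let P : Fin 7 → Fin 3 → k :=
      ![![1, 0, 0], ![0, 1, 0], ![0, 0, 1], ![1, 1, 1], ![1, -1, 1], ![1, 1, -1],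
        ![-1, 1, 1]]
    (∀ v : Fin 3 → k, v ≠ 0 →
      ((eval v C0 = 0 ∧ eval v C1 = 0 ∧ eval v C2 = 0) ↔
        ∃ (c : k) (i : Fin 7), v = c • P i)) ∧
    (∀ i : Fin 7, ¬ ∃ q : MvPolynomial (Fin 3) k, q ≠ 0 ∧ q.IsHomogeneous 2 ∧
      ∀ j, j ≠ i → eval (P j) q = 0) := by
  intro C0 C1 C2 P
  constructor
  · intro v hv
    constructor
    · rintro ⟨h0, h1, h2⟩
      simp only [C0, C1, C2, eval_mul, eval_sub, eval_pow, eval_X] at h0 h1 h2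
      by_cases hv0 : v 0 = 0
      · rcases mul_eq_zero.mp h1 with hv1 | hsq
        · refine ⟨v 2, 2, funext fun j => ?_⟩
          fin_cases j <;> simp [P, hv0, hv1]
        · have hv2 : v 2 = 0 := by
            have : v 2 ^ 2 = 0 := by rw [hv0] at hsq; linear_combination hsq
            exact pow_eq_zero_iff (by norm_num) |>.mp this
          refine ⟨v 1, 1, funext fun j => ?_⟩
          fin_cases j <;> simp [P, hv0, hv2]
      · by_cases hv1 : v 1 = 0
        · have hv2 : v 2 = 0 := by
            have : v 2 ^ 2 = 0 := by
              rcases mul_eq_zero.mp h0 with h | h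
              · exact absurd h hv0
              · rw [hv1] at h; linear_combination -h
            exact pow_eq_zero_iff (by norm_num) |>.mp this
          refine ⟨v 0, 0, funext fun j => ?_⟩
          fin_cases j <;> simp [P, hv1, hv2]
        · have e0 : v 1 ^ 2 = v 2 ^ 2 := by
            rcases mul_eq_zero.mp h0 with h | h
            · exact absurd h hv0
            · linear_combination h
          have e1 : v 2 ^ 2 = v 0 ^ 2 := by
            rcases mul_eq_zero.mp h1 with h | h
            · exact absurd h hv1
            · linear_combination h
          have s1 : v 1 = v 0 ∨ v 1 = -v 0 := by
            have : (v 1 - v 0) * (v 1 + v 0) = 0 := by linear_combination e0 + e1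
            rcases mul_eq_zero.mp this with h | h
            · left; linear_combination h
            · right; linear_combination h
          have s2 : v 2 = v 0 ∨ v 2 = -v 0 := by
            have : (v 2 - v 0) * (v 2 + v 0) = 0 := by linear_combination e1
            rcases mul_eq_zero.mp this with h | h
            · left; linear_combination h
            · right; linear_combination h
          rcases s1 with h1' | h1' <;> rcases s2 with h2' | h2'
          · exact ⟨v 0, 3, funext fun j => by fin_cases j <;> simp [P, h1', h2', vec7_5, vec7_6]⟩
          · exact ⟨v 0, 5, funext fun j => by fin_cases j <;> simp [P, h1', h2', vec7_5, vec7_6]⟩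
          · exact ⟨v 0, 4, funext fun j => by fin_cases j <;> simp [P, h1', h2', vec7_5, vec7_6]⟩
          · exact ⟨-v 0, 6, funext fun j => by fin_cases j <;> simp [P, h1', h2', vec7_5, vec7_6]⟩
    · rintro ⟨c, i, rfl⟩
      fin_cases i <;>
        refine ⟨?_, ?_, ?_⟩ <;>
        simp [C0, C1, C2, P, eval_mul, eval_sub, eval_pow, eval_X, Pi.smul_apply,
          smul_eq_mul, vec7_5, vec7_6]
  · rintro i ⟨q, hq0, hq2, hvv⟩
    set a0 := coeff (single 0 2) q with ha0d
    set a1 := coeff (single 1 2) q with ha1d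
    set a2 := coeff (single 2 2) q with ha2d
    set b0 := coeff (single 0 1 + single 1 1) q with hb0d
    set b1 := coeff (single 0 1 + single 2 1) q with hb1d
    set b2 := coeff (single 1 1 + single 2 1) q with hb2d
    have hrep := rep q hq2
    have key : ∀ j : Fin 7, j ≠ i →
        a0 * P j 0 ^ 2 + a1 * P j 1 ^ 2 + a2 * P j 2 ^ 2 + b0 * (P j 0 * P j 1)
          + b1 * (P j 0 * P j 2) + b2 * (P j 1 * P j 2) = 0 := by
      intro j hj
      have h := hvv j hj
      rw [hrep] at h
      simp only [eval_add, eval_mul, eval_C, eval_pow, eval_X] at h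
      linear_combination h
    have hq00 : q ≠ 0 := hq0
    apply hq00
    rw [hrep]
    have h4 : (4 : k) ≠ 0 := by norm_num
    have h2' : (2 : k) ≠ 0 := by norm_num
    fin_cases i
    · have e1 := key 1 (by decide); have e2 := key 2 (by decide)
      have e3 := key 3 (by decide); have e4 := key 4 (by decide)
      have e5 := key 5 (by decide); have e6 := key 6 (by decide)
      simp only [P, vec7_5, vec7_6, Matrix.cons_val_zero, Matrix.cons_val_one,
        Matrix.head_cons, Matrix.cons_val_two, Matrix.tail_cons, Matrix.cons_val_three,
        Matrix.cons_val_four] at e1 e2 e3 e4 e5 e6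
      have hA1 : a1 = 0 := by linear_combination e1
      have hA2 : a2 = 0 := by linear_combination e2
      have hA0 : a0 = 0 := by linear_combination (e3 + e4 + e5 + e6) / 4 - hA1 - hA2
      have hB0 : b0 = 0 := by linear_combination (e3 - e4 + e5 - e6) / 4
      have hB1 : b1 = 0 := by linear_combination (e3 + e4 - e5 - e6) / 4
      have hB2 : b2 = 0 := by linear_combination (e3 - e4 - e5 + e6) / 4
      rw [← ha0d, ← ha1d, ← ha2d, ← hb0d, ← hb1d, ← hb2d, hA0, hA1, hA2, hB0, hB1, hB2]; simp
    · have e1 := key 0 (by decide); have e2 := key 2 (by decide)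
      have e3 := key 3 (by decide); have e4 := key 4 (by decide)
      have e5 := key 5 (by decide); have e6 := key 6 (by decide)
      simp only [P, vec7_5, vec7_6, Matrix.cons_val_zero, Matrix.cons_val_one,
        Matrix.head_cons, Matrix.cons_val_two, Matrix.tail_cons, Matrix.cons_val_three,
        Matrix.cons_val_four] at e1 e2 e3 e4 e5 e6
      have hA0 : a0 = 0 := by linear_combination e1
      have hA2 : a2 = 0 := by linear_combination e2
      have hA1 : a1 = 0 := by linear_combination (e3 + e4 + e5 + e6) / 4 - hA0 - hA2
      have hB0 : b0 = 0 := by linear_combination (e3 - e4 + e5 - e6) / 4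
      have hB1 : b1 = 0 := by linear_combination (e3 + e4 - e5 - e6) / 4
      have hB2 : b2 = 0 := by linear_combination (e3 - e4 - e5 + e6) / 4
      rw [← ha0d, ← ha1d, ← ha2d, ← hb0d, ← hb1d, ← hb2d, hA0, hA1, hA2, hB0, hB1, hB2]; simp
    · have e1 := key 0 (by decide); have e2 := key 1 (by decide)
      have e3 := key 3 (by decide); have e4 := key 4 (by decide)
      have e5 := key 5 (by decide); have e6 := key 6 (by decide)
      simp only [P, vec7_5, vec7_6, Matrix.cons_val_zero, Matrix.cons_val_one,
        Matrix.head_cons, Matrix.cons_val_two, Matrix.tail_cons, Matrix.cons_val_three,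
        Matrix.cons_val_four] at e1 e2 e3 e4 e5 e6
      have hA0 : a0 = 0 := by linear_combination e1
      have hA1 : a1 = 0 := by linear_combination e2
      have hA2 : a2 = 0 := by linear_combination (e3 + e4 + e5 + e6) / 4 - hA0 - hA1
      have hB0 : b0 = 0 := by linear_combination (e3 - e4 + e5 - e6) / 4
      have hB1 : b1 = 0 := by linear_combination (e3 + e4 - e5 - e6) / 4
      have hB2 : b2 = 0 := by linear_combination (e3 - e4 - e5 + e6) / 4
      rw [← ha0d, ← ha1d, ← ha2d, ← hb0d, ← hb1d, ← hb2d, hA0, hA1, hA2, hB0, hB1, hB2]; simp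
    · have e0 := key 0 (by decide); have e1 := key 1 (by decide)
      have e2 := key 2 (by decide)
      have e4 := key 4 (by decide); have e5 := key 5 (by decide)
      have e6 := key 6 (by decide)
      simp only [P, vec7_5, vec7_6, Matrix.cons_val_zero, Matrix.cons_val_one,
        Matrix.head_cons, Matrix.cons_val_two, Matrix.tail_cons, Matrix.cons_val_three,
        Matrix.cons_val_four] at e0 e1 e2 e4 e5 e6
      have hA0 : a0 = 0 := by linear_combination e0
      have hA1 : a1 = 0 := by linear_combination e1
      have hA2 : a2 = 0 := by linear_combination e2
      have hB2 : b2 = 0 := by linear_combination -(e4 + e5) / 2 + hA0 + hA1 + hA2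
      have hB0 : b0 = 0 := by linear_combination -(e4 + e6) / 2 + hA0 + hA1 + hA2
      have hB1 : b1 = 0 := by linear_combination -(e5 + e6) / 2 + hA0 + hA1 + hA2
      rw [← ha0d, ← ha1d, ← ha2d, ← hb0d, ← hb1d, ← hb2d, hA0, hA1, hA2, hB0, hB1, hB2]; simp
    · have e0 := key 0 (by decide); have e1 := key 1 (by decide)
      have e2 := key 2 (by decide)
      have e3 := key 3 (by decide); have e5 := key 5 (by decide)
      have e6 := key 6 (by decide)
      simp only [P, vec7_5, vec7_6, Matrix.cons_val_zero, Matrix.cons_val_one,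
        Matrix.head_cons, Matrix.cons_val_two, Matrix.tail_cons, Matrix.cons_val_three,
        Matrix.cons_val_four] at e0 e1 e2 e3 e5 e6
      have hA0 : a0 = 0 := by linear_combination e0
      have hA1 : a1 = 0 := by linear_combination e1
      have hA2 : a2 = 0 := by linear_combination e2
      have hB0 : b0 = 0 := by linear_combination (e3 + e5) / 2 - hA0 - hA1 - hA2
      have hB2 : b2 = 0 := by linear_combination (e3 + e6) / 2 - hA0 - hA1 - hA2
      have hB1 : b1 = 0 := by linear_combination -(e5 + e6) / 2 + hA0 + hA1 + hA2
      rw [← ha0d, ← ha1d, ← ha2d, ← hb0d, ← hb1d, ← hb2d, hA0, hA1, hA2, hB0, hB1, hB2]; simp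
    · have e0 := key 0 (by decide); have e1 := key 1 (by decide)
      have e2 := key 2 (by decide)
      have e3 := key 3 (by decide); have e4 := key 4 (by decide)
      have e6 := key 6 (by decide)
      simp only [P, vec7_5, vec7_6, Matrix.cons_val_zero, Matrix.cons_val_one,
        Matrix.head_cons, Matrix.cons_val_two, Matrix.tail_cons, Matrix.cons_val_three,
        Matrix.cons_val_four] at e0 e1 e2 e3 e4 e6
      have hA0 : a0 = 0 := by linear_combination e0
      have hA1 : a1 = 0 := by linear_combination e1
      have hA2 : a2 = 0 := by linear_combination e2
      have hB1 : b1 = 0 := by linear_combination (e3 + e4) / 2 - hA0 - hA1 - hA2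
      have hB2 : b2 = 0 := by linear_combination (e3 + e6) / 2 - hA0 - hA1 - hA2
      have hB0 : b0 = 0 := by linear_combination -(e4 + e6) / 2 + hA0 + hA1 + hA2
      rw [← ha0d, ← ha1d, ← ha2d, ← hb0d, ← hb1d, ← hb2d, hA0, hA1, hA2, hB0, hB1, hB2]; simp
    · have e0 := key 0 (by decide); have e1 := key 1 (by decide)
      have e2 := key 2 (by decide)
      have e3 := key 3 (by decide); have e4 := key 4 (by decide)
      have e5 := key 5 (by decide)
      simp only [P, vec7_5, vec7_6, Matrix.cons_val_zero, Matrix.cons_val_one,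
        Matrix.head_cons, Matrix.cons_val_two, Matrix.tail_cons, Matrix.cons_val_three,
        Matrix.cons_val_four] at e0 e1 e2 e3 e4 e5
      have hA0 : a0 = 0 := by linear_combination e0
      have hA1 : a1 = 0 := by linear_combination e1
      have hA2 : a2 = 0 := by linear_combination e2
      have hB1 : b1 = 0 := by linear_combination (e3 + e4) / 2 - hA0 - hA1 - hA2
      have hB0 : b0 = 0 := by linear_combination (e3 + e5) / 2 - hA0 - hA1 - hA2
      have hB2 : b2 = 0 := by linear_combination -(e4 + e5) / 2 + hA0 + hA1 + hA2
      rw [← ha0d, ← ha1d, ← ha2d, ← hb0d, ← hb1d, ← hb2d, hA0, hA1, hA2, hB0, hB1, hB2]; simp
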